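/- (Sufficient condition for identifiability.) A nonparametric conditional independence bivariate mixture model P(x,y) = ∑_{i=1}^C w_i f^(i)_x(x) f^(i)_y(y) with C ≥ 2 components is uniquely identifiable up to permutation of component labels if for every i ∈ {1,…,C} and each variate t ∈ {x,y}: esssup_t [ w_i f^(i)_t(t) / P_t(t) ] = 1, where P_t is the marginal mixture density of variate t. -/

import Mathlib

open MeasureTheory BigOperators

open Filter

section AuxAll

variable {C : ℕ}

section OneVar
variable {α : Type*} [MeasurableSpace α] {μ : Measure α}
  {w : Fin C → ℝ} {f : Fin C → α → ℝ}


variable {C : ℕ}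

lemma myIntegrable {α : Type*} [MeasurableSpace α] {μ : Measure α} {f : α → ℝ}
    (h : ∫ x, f x ∂μ = 1) : Integrable f μ := by
  by_contra hn
  rw [integral_undef hn] at h
  norm_num at h

/-- essSup of a zero measure in ℝ is 0. -/
lemma essSup_zero_measure {α : Type*} [MeasurableSpace α] (g : α → ℝ) :
    essSup g (0 : Measure α) = 0 := by
  rw [essSup_eq_sInf]
  have : { a : ℝ | (0 : Measure α) { x | a < g x } = 0 } = Set.univ := by
    ext a; simp
  rw [this]
  apply Real.sInf_of_not_bddBelow
  intro ⟨b, hb⟩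
  have h1 := hb (Set.mem_univ (b - 1))
  linarith

lemma essSup_le_of_meas_zero {α : Type*} [MeasurableSpace α] {m : Measure α} (hm : m ≠ 0)
    {g : α → ℝ} (h0 : ∀ x, 0 ≤ g x) {c : ℝ} (h : m { x | c < g x } = 0) :
    essSup g m ≤ c := by
  rw [essSup_eq_sInf]
  refine csInf_le ⟨0, ?_⟩ h
  intro a ha
  have ha' : m { x | a < g x } = 0 := ha
  by_contra hlt
  push_neg at hlt
  have huniv : { x | a < g x } = Set.univ := by
    ext x; simp only [Set.mem_setOf_eq, Set.mem_univ, iff_true]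
    exact lt_of_lt_of_le hlt (h0 x)
  rw [huniv] at ha'
  exact hm (Measure.measure_univ_eq_zero.mp ha')

variable {α : Type*} [MeasurableSpace α] {μ : Measure α}
  {w : Fin C → ℝ} {f : Fin C → α → ℝ}

lemma wpos (hw : ∀ k, 0 ≤ w k) (hf_nonneg : ∀ k x, 0 ≤ f k x) (i : Fin C)
    (hsuff : essSup (fun x => w i * f i x / (∑ k, w k * f k x))
      (μ.withDensity (fun x => ENNReal.ofReal (∑ k, w k * f k x))) = 1) :
    0 < w i := by
  set m := μ.withDensity (fun x => ENNReal.ofReal (∑ k, w k * f k x)) with hmdef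
  by_cases hm : m = 0
  · rw [hm, essSup_zero_measure] at hsuff; norm_num at hsuff
  rcases (hw i).lt_or_eq with h | h
  · exact h
  · exfalso
    have h0 : (fun x => w i * f i x / (∑ k, w k * f k x)) = fun _ => (0:ℝ) := by
      funext x; rw [← h]; simp
    rw [h0] at hsuff
    have : { x : α | (0:ℝ) < (fun _ : α => (0:ℝ)) x } = ∅ := by ext x; simp
    have hle := essSup_le_of_meas_zero hm (g := fun _ : α => (0:ℝ)) (fun _ => le_rfl) (c := 0)
      (by rw [this]; simp)
    rw [hsuff] at hle
    norm_num at hle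

lemma anchor (hw : ∀ k, 0 ≤ w k) (hf_meas : ∀ k, Measurable (f k))
    (hf_nonneg : ∀ k x, 0 ≤ f k x) (hf_one : ∀ k, ∫ x, f k x ∂μ = 1)
    (i : Fin C)
    (hsuff : essSup (fun x => w i * f i x / (∑ k, w k * f k x))
      (μ.withDensity (fun x => ENNReal.ofReal (∑ k, w k * f k x))) = 1)
    {ε : ℝ} (hε0 : 0 < ε) (hε1 : ε < 1) :
    ∃ S : Set α, MeasurableSet S ∧ 0 < (∫ x in S, (∑ k, w k * f k x) ∂μ) ∧
      (∀ k, k ≠ i → (∫ x in S, w k * f k x ∂μ) ≤ ε * ∫ x in S, (∑ k, w k * f k x) ∂μ) ∧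
      (1 - ε) * (∫ x in S, (∑ k, w k * f k x) ∂μ) ≤ ∫ x in S, w i * f i x ∂μ := by
  set P : α → ℝ := fun x => ∑ k, w k * f k x with hPdef
  have hPmeas : Measurable P := by
    apply Finset.measurable_sum
    exact fun k _ => (hf_meas k).const_mul _
  have hPnonneg : ∀ x, 0 ≤ P x := fun x =>
    Finset.sum_nonneg fun k _ => mul_nonneg (hw k) (hf_nonneg k x)
  have hPint : Integrable P μ := by
    apply integrable_finset_sum
    exact fun k _ => (myIntegrable (hf_one k)).const_mul _
  set r : α → ℝ := fun x => w i * f i x / P x with hrdef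
  have hrnonneg : ∀ x, 0 ≤ r x := fun x =>
    div_nonneg (mul_nonneg (hw i) (hf_nonneg i x)) (hPnonneg x)
  set S : Set α := { x | 1 - ε < r x } with hSdef
  have hS : MeasurableSet S := by
    apply measurableSet_lt measurable_const
    exact ((hf_meas i).const_mul _).div hPmeas
  -- pointwise facts on S
  have hmem : ∀ x ∈ S, 0 < P x ∧ (1 - ε) * P x < w i * f i x := by
    intro x hx
    have hr : 1 - ε < r x := hx
    have hP0 : 0 < P x := by
      rcases (hPnonneg x).lt_or_eq with h | h
      · exact h
      · exfalso; rw [hrdef] at hr; simp only [← h, div_zero] at hr; linarith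
    exact ⟨hP0, by rwa [lt_div_iff₀ hP0] at hr⟩
  have hdom : ∀ x ∈ S, ∀ k, k ≠ i → w k * f k x ≤ ε * P x := by
    intro x hx k hk
    obtain ⟨hP0, hif⟩ := hmem x hx
    have hsub : w i * f i x + w k * f k x ≤ P x := by
      have h2 : ∑ l ∈ ({i, k} : Finset (Fin C)), w l * f l x ≤ ∑ l, w l * f l x :=
        Finset.sum_le_sum_of_subset_of_nonneg (Finset.subset_univ _)
          (fun l _ _ => mul_nonneg (hw l) (hf_nonneg l x))
      rwa [Finset.sum_pair (Ne.symm hk)] at h2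
    nlinarith
  -- measure positivity
  set mμ := μ.withDensity (fun x => ENNReal.ofReal (P x)) with hmμ
  have hmne : mμ ≠ 0 := by
    intro h0
    rw [h0, essSup_zero_measure] at hsuff
    norm_num at hsuff
  have hSpos : mμ S ≠ 0 := by
    intro h0
    have hle := essSup_le_of_meas_zero hmne hrnonneg (c := 1 - ε) h0
    rw [hsuff] at hle
    linarith
  have hSl : mμ S = ∫⁻ x in S, ENNReal.ofReal (P x) ∂μ := withDensity_apply _ hS
  have hlt : ∫⁻ x in S, ENNReal.ofReal (P x) ∂μ < ⊤ := by
    calc ∫⁻ x in S, ENNReal.ofReal (P x) ∂μ ≤ ∫⁻ x, ENNReal.ofReal (P x) ∂μ :=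
          setLIntegral_le_lintegral _ _
      _ = ENNReal.ofReal (∫ x, P x ∂μ) :=
          (ofReal_integral_eq_lintegral_ofReal hPint
            (Eventually.of_forall hPnonneg)).symm
      _ < ⊤ := ENNReal.ofReal_lt_top
  have hmrepr : ∫ x in S, P x ∂μ = (∫⁻ x in S, ENNReal.ofReal (P x) ∂μ).toReal := by
    rw [integral_eq_lintegral_of_nonneg_ae (Eventually.of_forall hPnonneg)
      (hPmeas.aestronglyMeasurable.restrict)]
  have hmpos : 0 < ∫ x in S, P x ∂μ := by
    rw [hmrepr]
    exact ENNReal.toReal_pos (hSl ▸ hSpos) hlt.ne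
  refine ⟨S, hS, hmpos, ?_, ?_⟩
  · intro k hk
    have h1 : ∫ x in S, w k * f k x ∂μ ≤ ∫ x in S, ε * P x ∂μ := by
      apply setIntegral_mono_on
      · exact ((myIntegrable (hf_one k)).const_mul _).restrict
      · exact (hPint.const_mul ε).restrict
      · exact hS
      · exact fun x hx => hdom x hx k hk
    exact h1.trans (le_of_eq (integral_const_mul ε P))
  · have h1 : ∫ x in S, (1 - ε) * P x ∂μ ≤ ∫ x in S, w i * f i x ∂μ := by
      apply setIntegral_mono_on
      · exact (hPint.const_mul _).restrict
      · exact ((myIntegrable (hf_one i)).const_mul _).restrict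
      · exact hS
      · exact fun x hx => le_of_lt ((hmem x hx).2)
    exact le_trans (le_of_eq (integral_const_mul (1 - ε) P).symm) h1



variable {C : ℕ} {α : Type*} [MeasurableSpace α] {μ : Measure α}
  {w : Fin C → ℝ} {f : Fin C → α → ℝ}

lemma tendsto_eps : Tendsto (fun n : ℕ => 1 / ((n : ℝ) + 2)) atTop (nhds 0) := by
  have h1 : Tendsto (fun n : ℕ => ((n : ℝ) + 2)) atTop atTop :=
    tendsto_atTop_add_const_right atTop 2 tendsto_natCast_atTop_atTop
  simpa [one_div, Pi.inv_def] using h1.inv_tendsto_atTop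

lemma eps_pos (n : ℕ) : 0 < 1 / ((n : ℝ) + 2) := by positivity

lemma eps_lt_one (n : ℕ) : 1 / ((n : ℝ) + 2) < 1 := by
  rw [div_lt_one (by positivity)]
  have : (0:ℝ) ≤ (n:ℝ) := Nat.cast_nonneg n
  linarith

lemma indep (hw : ∀ k, 0 ≤ w k) (hf_meas : ∀ k, Measurable (f k))
    (hf_nonneg : ∀ k x, 0 ≤ f k x) (hf_one : ∀ k, ∫ x, f k x ∂μ = 1)
    (hsuff : ∀ i, essSup (fun x => w i * f i x / (∑ k, w k * f k x))
      (μ.withDensity (fun x => ENNReal.ofReal (∑ k, w k * f k x))) = 1)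
    (c : Fin C → ℝ) (hc : ∀ᵐ x ∂μ, ∑ k, c k * f k x = 0) : c = 0 := by
  have hwpos : ∀ k, 0 < w k := fun k => wpos hw hf_nonneg k (hsuff k)
  funext i
  set K : ℝ := ∑ k ∈ Finset.univ.erase i, |c k| / w k with hKdef
  have hK0 : 0 ≤ K :=
    Finset.sum_nonneg fun k _ => div_nonneg (abs_nonneg _) (hwpos k).le
  have key : ∀ n : ℕ, |c i| * (1 - 1 / ((n:ℝ) + 2)) ≤ w i * K * (1 / ((n:ℝ) + 2)) := by
    intro n
    set ε : ℝ := 1 / ((n:ℝ) + 2) with hεdef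
    obtain ⟨S, hS, hm, hsm, hbig⟩ :=
      anchor hw hf_meas hf_nonneg hf_one i (hsuff i) (eps_pos n) (eps_lt_one n)
    set m : ℝ := ∫ x in S, (∑ k, w k * f k x) ∂μ with hmdef
    set I : Fin C → ℝ := fun k => ∫ x in S, f k x ∂μ with hIdef
    have hIpos : ∀ k, 0 ≤ I k := fun k =>
      setIntegral_nonneg hS fun x _ => hf_nonneg k x
    have hwfI : ∀ k, (∫ x in S, w k * f k x ∂μ) = w k * I k := fun k =>
      integral_const_mul (w k) (f k)
    have hz : ∑ k, c k * I k = 0 := by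
      have h1 : ∫ x in S, (∑ k, c k * f k x) ∂μ = 0 :=
        integral_eq_zero_of_ae (ae_restrict_of_ae hc)
      rw [integral_finset_sum] at h1
      · simpa [integral_const_mul] using h1
      · exact fun k _ => ((myIntegrable (hf_one k)).const_mul _).restrict
    have hsm' : ∀ k, k ≠ i → w k * I k ≤ ε * m := by
      intro k hk; rw [← hwfI k]; exact hsm k hk
    have hbig' : (1 - ε) * m ≤ w i * I i := by rw [← hwfI i]; exact hbig
    -- main chain
    have s4 : c i * I i = -∑ k ∈ Finset.univ.erase i, c k * I k := by
      have := Finset.add_sum_erase Finset.univ (fun k => c k * I k) (Finset.mem_univ i)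
      rw [hz] at this; linarith
    have s5 : |c i| * I i ≤ K * (ε * m) := by
      have h1 : |c i * I i| ≤ ∑ k ∈ Finset.univ.erase i, |c k * I k| := by
        rw [s4, abs_neg]; exact Finset.abs_sum_le_sum_abs _ _
      have h2 : ∑ k ∈ Finset.univ.erase i, |c k * I k| ≤ K * (ε * m) := by
        rw [hKdef, Finset.sum_mul]
        apply Finset.sum_le_sum
        intro k hk
        have hki : k ≠ i := Finset.ne_of_mem_erase hk
        have e1 : |c k * I k| = |c k| / w k * (w k * I k) := by
          rw [abs_mul, abs_of_nonneg (hIpos k), div_mul_eq_mul_div,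
            eq_div_iff (hwpos k).ne']
          ring
        rw [e1]
        exact mul_le_mul_of_nonneg_left (hsm' k hki)
          (div_nonneg (abs_nonneg _) (hwpos k).le)
      calc |c i| * I i = |c i * I i| := by rw [abs_mul, abs_of_nonneg (hIpos i)]
        _ ≤ ∑ k ∈ Finset.univ.erase i, |c k * I k| := h1
        _ ≤ K * (ε * m) := h2
    have s6 : |c i| * ((1 - ε) * m) ≤ w i * (K * (ε * m)) := by
      calc |c i| * ((1 - ε) * m) ≤ |c i| * (w i * I i) :=
            mul_le_mul_of_nonneg_left hbig' (abs_nonneg _)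
        _ = w i * (|c i| * I i) := by ring
        _ ≤ w i * (K * (ε * m)) := mul_le_mul_of_nonneg_left s5 (hwpos i).le
    nlinarith [hm, abs_nonneg (c i), (hwpos i).le, hK0]
  have hten : Tendsto (fun n : ℕ => w i * K * (1 / ((n:ℝ) + 2))) atTop (nhds 0) := by
    have := tendsto_eps.const_mul (w i * K)
    simpa using this
  have hten2 : Tendsto (fun n : ℕ => |c i| * (1 - 1 / ((n:ℝ) + 2))) atTop (nhds (|c i|)) := by
    have h1 : Tendsto (fun n : ℕ => 1 - 1 / ((n:ℝ) + 2)) atTop (nhds 1) := by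
      have := tendsto_eps.const_sub 1
      simpa using this
    have := h1.const_mul (|c i|)
    simpa using this
  have habs : |c i| ≤ 0 := le_of_tendsto_of_tendsto' hten2 hten key
  have : c i = 0 := abs_eq_zero.mp (le_antisymm habs (abs_nonneg _))
  simpa using this


variable {C : ℕ} {α : Type*} [MeasurableSpace α] {μ : Measure α}

lemma bdd_mul_int {f φ : α → ℝ} (hf : Integrable f μ) (hφm : Measurable φ)
    (hφb : ∃ M, ∀ x, |φ x| ≤ M) : Integrable (fun x => f x * φ x) μ := by
  obtain ⟨M, hM⟩ := hφb
  have := hf.bdd_mul hφm.aestronglyMeasurable (c := M) (Filter.Eventually.of_forall fun x => by simpa using hM x)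
  exact this.congr (Filter.Eventually.of_forall fun x => mul_comm _ _)

lemma dual {f : Fin C → α → ℝ}
    (hf_meas : ∀ k, Measurable (f k)) (hf_int : ∀ k, Integrable (f k) μ)
    (hindep : ∀ c : Fin C → ℝ, (∀ᵐ x ∂μ, ∑ k, c k * f k x = 0) → c = 0) :
    ∃ φ : Fin C → α → ℝ, (∀ l, Measurable (φ l)) ∧ (∀ l, ∃ M, ∀ x, |φ l x| ≤ M) ∧
      ∀ l k, ∫ x, f k x * φ l x ∂μ = if k = l then 1 else 0 := by
  classical
  let R : Submodule ℝ (EuclideanSpace ℝ (Fin C)) :=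
  { carrier := { v | ∃ φ : α → ℝ, Measurable φ ∧ (∃ M, ∀ x, |φ x| ≤ M) ∧
      ∀ k, v k = ∫ x, f k x * φ x ∂μ }
    add_mem' := by
      rintro v u ⟨φ, hφm, hφb, hφv⟩ ⟨ψ, hψm, hψb, hψv⟩
      refine ⟨fun x => φ x + ψ x, hφm.add hψm, ?_, ?_⟩
      · obtain ⟨M, hM⟩ := hφb; obtain ⟨N, hN⟩ := hψb
        exact ⟨M + N, fun x => (abs_add_le _ _).trans (add_le_add (hM x) (hN x))⟩
      · intro k
        have h1 : (fun x => f k x * (φ x + ψ x))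
            = fun x => f k x * φ x + f k x * ψ x := by funext x; ring
        show v k + u k = _
        rw [hφv k, hψv k, h1,
          integral_add (bdd_mul_int (hf_int k) hφm hφb) (bdd_mul_int (hf_int k) hψm hψb)]
    zero_mem' := by
      refine ⟨fun _ => 0, measurable_const, ⟨0, by simp⟩, fun k => ?_⟩
      show (0:ℝ) = _
      simp
    smul_mem' := by
      rintro r v ⟨φ, hφm, ⟨M, hM⟩, hφv⟩
      refine ⟨fun x => r * φ x, hφm.const_mul r,
        ⟨|r| * M, fun x => by
          rw [abs_mul]; exact mul_le_mul_of_nonneg_left (hM x) (abs_nonneg r)⟩, fun k => ?_⟩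
      show r * v k = _
      have h1 : (fun x => f k x * (r * φ x)) = fun x => r * (f k x * φ x) := by
        funext x; ring
      rw [hφv k, h1, integral_const_mul] }
  have htop : R = ⊤ := by
    by_contra hne
    have hbot : Rᗮ ≠ ⊥ := fun h => hne (Submodule.orthogonal_eq_bot_iff.mp h)
    obtain ⟨c, hcR, hc0⟩ := Submodule.exists_mem_ne_zero_of_ne_bot hbot
    set h : α → ℝ := fun x => ∑ k, c k * f k x with hhdef
    have hhmeas : Measurable h := by
      apply Finset.measurable_sum
      exact fun k _ => (hf_meas k).const_mul _
    have hhint : Integrable h μ :=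
      integrable_finset_sum _ (fun k _ => (hf_int k).const_mul _)
    set φ : α → ℝ := fun x => if 0 ≤ h x then (1:ℝ) else -1 with hφdef
    have hφm : Measurable φ :=
      Measurable.ite (measurableSet_le measurable_const hhmeas)
        measurable_const measurable_const
    have hφb : ∃ M, ∀ x, |φ x| ≤ M := ⟨1, fun x => by
      rw [hφdef]; dsimp only; split <;> simp⟩
    set v : EuclideanSpace ℝ (Fin C) := WithLp.toLp 2 (fun k => ∫ x, f k x * φ x ∂μ : Fin C → ℝ) with hvdef
    have hvR : v ∈ R := ⟨φ, hφm, hφb, fun k => rfl⟩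
    have horth : (inner ℝ v c : ℝ) = 0 := (Submodule.mem_orthogonal R c).mp hcR v hvR
    have hinner : (inner ℝ v c : ℝ) = ∑ k, v k * c k := by
      simp [PiLp.inner_apply, RCLike.inner_apply, conj_trivial, mul_comm]
    have hsum0 : ∑ k, c k * ∫ x, f k x * φ x ∂μ = 0 := by
      rw [← horth, hinner]
      exact Finset.sum_congr rfl fun k _ => mul_comm _ _
    have h2 : ∫ x, h x * φ x ∂μ = ∑ k, c k * ∫ x, f k x * φ x ∂μ := by
      have h3 : (fun x => h x * φ x) = fun x => ∑ k, c k * (f k x * φ x) := by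
        funext x; rw [hhdef]; dsimp only; rw [Finset.sum_mul]
        exact Finset.sum_congr rfl fun k _ => by ring
      rw [h3, integral_finset_sum _
        (fun k _ => (bdd_mul_int (hf_int k) hφm hφb).const_mul _)]
      exact Finset.sum_congr rfl fun k _ => integral_const_mul _ _
    have h1 : ∀ x, h x * φ x = |h x| := by
      intro x
      rw [hφdef]; dsimp only
      split
      · rw [mul_one, abs_of_nonneg (by assumption)]
      · rename_i hx
        rw [mul_neg_one, abs_of_neg (lt_of_not_ge hx)]
    have hzero : ∫ x, |h x| ∂μ = 0 := by
      rw [← funext h1, h2, hsum0]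
    have habs : (fun x => |h x|) =ᵐ[μ] 0 :=
      (integral_eq_zero_iff_of_nonneg (fun x => abs_nonneg _) hhint.abs).mp hzero
    have hc := hindep (fun k => c k) (habs.mono fun x hx => by
      have : |h x| = 0 := hx
      exact abs_eq_zero.mp this)
    exact hc0 (by ext k; exact congrFun hc k)
  have hex : ∀ l : Fin C, ∃ φ : α → ℝ, Measurable φ ∧ (∃ M, ∀ x, |φ x| ≤ M) ∧
      ∀ k, (EuclideanSpace.single l (1:ℝ)) k = ∫ x, f k x * φ x ∂μ := by
    intro l
    have : (EuclideanSpace.single l (1:ℝ)) ∈ R := htop ▸ Submodule.mem_top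
    exact this
  choose φ hφm hφb hφv using hex
  refine ⟨φ, hφm, hφb, fun l k => ?_⟩
  rw [← hφv l k, EuclideanSpace.single_apply]


end OneVar

section OneVarB
variable {α : Type*} [MeasurableSpace α] {μ : Measure α}
  {w : Fin C → ℝ} {f : Fin C → α → ℝ}

variable {C : ℕ} {α : Type*} [MeasurableSpace α] {μ : Measure α}
  {w : Fin C → ℝ} {f : Fin C → α → ℝ}

lemma componentA {β : Type*} [MeasurableSpace β] {ν : Measure β}
    {g : Fin C → β → ℝ} {w' : Fin C → ℝ} {f' : Fin C → α → ℝ} {g' : Fin C → β → ℝ}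
    (hw : ∀ k, 0 ≤ w k) (hf_meas : ∀ k, Measurable (f k))
    (hf_nonneg : ∀ k x, 0 ≤ f k x) (hf_one : ∀ k, ∫ x, f k x ∂μ = 1)
    (hw' : ∀ j, 0 ≤ w' j) (hf'_meas : ∀ j, Measurable (f' j))
    (hf'_nonneg : ∀ j x, 0 ≤ f' j x) (hf'_one : ∀ j, ∫ x, f' j x ∂μ = 1)
    (i : Fin C)
    (hsuff : essSup (fun x => w i * f i x / (∑ k, w k * f k x))
      (μ.withDensity (fun x => ENNReal.ofReal (∑ k, w k * f k x))) = 1)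
    (heq : ∀ᵐ y ∂ν, ∀ᵐ x ∂μ,
      ∑ j, w' j * f' j x * g' j y = ∑ k, w k * f k x * g k y)
    (hmarg : ∀ᵐ x ∂μ, ∑ j, w' j * f' j x = ∑ k, w k * f k x) :
    ∃ a : Fin C → ℝ, (∀ j, 0 ≤ a j) ∧ (∑ j, a j = 1) ∧
      ∀ᵐ y ∂ν, g i y = ∑ j, a j * g' j y := by
  choose S hS hm hsm hbig using fun n : ℕ =>
    anchor hw hf_meas hf_nonneg hf_one i hsuff (eps_pos n) (eps_lt_one n)
  set m : ℕ → ℝ := fun n => ∫ x in S n, (∑ k, w k * f k x) ∂μ with hmdef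
  set cc : ℕ → Fin C → ℝ := fun n k => (∫ x in S n, w k * f k x ∂μ) / m n with hccdef
  set d : ℕ → Fin C → ℝ := fun n j => (∫ x in S n, w' j * f' j x ∂μ) / m n with hddef
  have hfint : ∀ k, Integrable (fun x => w k * f k x) μ :=
    fun k => (myIntegrable (hf_one k)).const_mul _
  have hf'int : ∀ j, Integrable (fun x => w' j * f' j x) μ :=
    fun j => (myIntegrable (hf'_one j)).const_mul _
  have hcnn : ∀ n k, 0 ≤ cc n k := fun n k =>
    div_nonneg (setIntegral_nonneg (hS n) fun x _ => mul_nonneg (hw k) (hf_nonneg k x)) (hm n).le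
  have hdnn : ∀ n j, 0 ≤ d n j := fun n j =>
    div_nonneg (setIntegral_nonneg (hS n) fun x _ => mul_nonneg (hw' j) (hf'_nonneg j x)) (hm n).le
  have hcsum : ∀ n, ∑ k, cc n k = 1 := by
    intro n
    rw [hccdef]
    rw [← Finset.sum_div]
    rw [← integral_finset_sum _ (fun k _ => (hfint k).restrict)]
    exact div_self (hm n).ne'
  have hdsum : ∀ n, ∑ j, d n j = 1 := by
    intro n
    rw [hddef]
    rw [← Finset.sum_div]
    rw [← integral_finset_sum _ (fun j _ => (hf'int j).restrict)]
    rw [integral_congr_ae (ae_restrict_of_ae hmarg)]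
    exact div_self (hm n).ne'
  have hcle : ∀ (n : ℕ) (k : Fin C), k ≠ i → cc n k ≤ 1 / ((n:ℝ) + 2) := by
    intro n k hk
    show (∫ x in S n, w k * f k x ∂μ) / m n ≤ 1 / ((n:ℝ) + 2)
    rw [div_le_iff₀ (hm n)]
    exact hsm n k hk
  have hcge : ∀ (n : ℕ), 1 - 1 / ((n:ℝ) + 2) ≤ cc n i := by
    intro n
    show 1 - 1 / ((n:ℝ) + 2) ≤ (∫ x in S n, w i * f i x ∂μ) / m n
    rw [le_div_iff₀ (hm n)]
    exact hbig n
  have hcub : ∀ n, cc n i ≤ 1 := by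
    intro n
    rw [← hcsum n]
    exact Finset.single_le_sum (fun k _ => hcnn n k) (Finset.mem_univ i)
  -- the a.e. identity for each n
  have hid : ∀ n : ℕ, ∀ᵐ y ∂ν, ∑ k, cc n k * g k y = ∑ j, d n j * g' j y := by
    intro n
    filter_upwards [heq] with y hy
    have h1 : ∫ x in S n, (∑ j, w' j * f' j x * g' j y) ∂μ
        = ∫ x in S n, (∑ k, w k * f k x * g k y) ∂μ :=
      integral_congr_ae (ae_restrict_of_ae hy)
    rw [integral_finset_sum _ (fun j _ => ((hf'int j).restrict).mul_const (g' j y)),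
      integral_finset_sum _ (fun k _ => ((hfint k).restrict).mul_const (g k y))] at h1
    simp only [integral_mul_const] at h1
    rw [hccdef, hddef]
    simp only [div_mul_eq_mul_div]
    rw [← Finset.sum_div, ← Finset.sum_div, h1]
  have hAll : ∀ᵐ y ∂ν, ∀ n, ∑ k, cc n k * g k y = ∑ j, d n j * g' j y :=
    (ae_all_iff).mpr hid
  -- compactness
  have hdmem : ∀ n, d n ∈ stdSimplex ℝ (Fin C) := fun n => ⟨fun j => hdnn n j, hdsum n⟩
  obtain ⟨a, ha_mem, φ, hφmono, hφtend⟩ :=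
    (isCompact_stdSimplex ℝ (Fin C)).tendsto_subseq hdmem
  have hdj : ∀ j, Tendsto (fun n => d (φ n) j) atTop (nhds (a j)) := by
    intro j
    exact (tendsto_pi_nhds.mp hφtend) j
  have hc_lim : ∀ k, Tendsto (fun n => cc (φ n) k) atTop
      (nhds (if k = i then (1:ℝ) else 0)) := by
    intro k
    have hφat : Tendsto φ atTop atTop := hφmono.tendsto_atTop
    by_cases hk : k = i
    · subst hk
      simp only [if_pos rfl]
      have hbase : Tendsto (fun n => cc n k) atTop (nhds 1) := by
        apply tendsto_of_tendsto_of_tendsto_of_le_of_le (g := fun n : ℕ => 1 - 1/((n:ℝ)+2))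
          (h := fun _ : ℕ => (1:ℝ))
        · have := tendsto_eps.const_sub 1
          simpa using this
        · exact tendsto_const_nhds
        · exact hcge
        · exact hcub
      exact hbase.comp hφat
    · simp only [if_neg hk]
      have hbase : Tendsto (fun n => cc n k) atTop (nhds 0) := by
        apply squeeze_zero (fun n => hcnn n k) (fun n => hcle n k hk) tendsto_eps
      exact hbase.comp hφat
  refine ⟨a, fun j => ha_mem.1 j, ha_mem.2, ?_⟩
  filter_upwards [hAll] with y hy
  have hL : Tendsto (fun n => ∑ k, cc (φ n) k * g k y) atTop
      (nhds (∑ k, (if k = i then (1:ℝ) else 0) * g k y)) :=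
    tendsto_finset_sum _ (fun k _ => (hc_lim k).mul_const (g k y))
  have hR : Tendsto (fun n => ∑ j, d (φ n) j * g' j y) atTop
      (nhds (∑ j, a j * g' j y)) :=
    tendsto_finset_sum _ (fun j _ => (hdj j).mul_const (g' j y))
  have hfun : (fun n => ∑ k, cc (φ n) k * g k y) = fun n => ∑ j, d (φ n) j * g' j y :=
    funext fun n => hy (φ n)
  rw [hfun] at hL
  have := tendsto_nhds_unique hL hR
  rw [← this]
  rw [Finset.sum_congr rfl (fun k _ => by rw [ite_mul, one_mul, zero_mul])]
  rw [Finset.sum_ite_eq' Finset.univ i (fun k => g k y)]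
  simp

end OneVarB

section TwoVar
variable {α β : Type*} [MeasurableSpace α] [MeasurableSpace β]
  {μ : Measure α} {ν : Measure β} [SigmaFinite μ] [SigmaFinite ν]

variable {C : ℕ} {α β : Type*} [MeasurableSpace α] [MeasurableSpace β]
  {μ : Measure α} {ν : Measure β} [SigmaFinite μ] [SigmaFinite ν]

lemma pair_half {w : Fin C → ℝ} {f : Fin C → α → ℝ} {g : Fin C → β → ℝ}
    (hf_int : ∀ k, Integrable (f k) μ) (hg_int : ∀ k, Integrable (g k) ν)
    (φ : α → ℝ) (ψ : β → ℝ) (hφm : Measurable φ) (hψm : Measurable ψ)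
    (hφb : ∃ M, ∀ x, |φ x| ≤ M) (hψb : ∃ M, ∀ y, |ψ y| ≤ M) :
    ∫ p, (∑ k, w k * f k p.1 * g k p.2) * (φ p.1 * ψ p.2) ∂(μ.prod ν)
      = ∑ k, w k * ((∫ x, f k x * φ x ∂μ) * (∫ y, g k y * ψ y ∂ν)) := by
  have hfφ : ∀ k, Integrable (fun x => f k x * φ x) μ :=
    fun k => bdd_mul_int (hf_int k) hφm hφb
  have hgψ : ∀ k, Integrable (fun y => g k y * ψ y) ν :=
    fun k => bdd_mul_int (hg_int k) hψm hψb
  have h1 : (fun p : α × β => (∑ k, w k * f k p.1 * g k p.2) * (φ p.1 * ψ p.2))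
      = fun p : α × β => ∑ k, w k * ((f k p.1 * φ p.1) * (g k p.2 * ψ p.2)) := by
    funext p; rw [Finset.sum_mul]
    exact Finset.sum_congr rfl fun k _ => by ring
  rw [h1, integral_finset_sum _ (fun k _ => ((hfφ k).mul_prod (hgψ k)).const_mul _)]
  refine Finset.sum_congr rfl fun k _ => ?_
  rw [integral_const_mul]
  congr 1
  exact integral_prod_mul (fun x => f k x * φ x) (fun y => g k y * ψ y)

lemma pair {w w' : Fin C → ℝ} {f f' : Fin C → α → ℝ} {g g' : Fin C → β → ℝ}
    (hf_int : ∀ k, Integrable (f k) μ) (hg_int : ∀ k, Integrable (g k) ν)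
    (hf'_int : ∀ k, Integrable (f' k) μ) (hg'_int : ∀ k, Integrable (g' k) ν)
    (φ : α → ℝ) (ψ : β → ℝ) (hφm : Measurable φ) (hψm : Measurable ψ)
    (hφb : ∃ M, ∀ x, |φ x| ≤ M) (hψb : ∃ M, ∀ y, |ψ y| ≤ M)
    (hae : ∀ᵐ p ∂(μ.prod ν),
      ∑ j, w' j * f' j p.1 * g' j p.2 = ∑ k, w k * f k p.1 * g k p.2) :
    ∑ j, w' j * ((∫ x, f' j x * φ x ∂μ) * (∫ y, g' j y * ψ y ∂ν))
      = ∑ k, w k * ((∫ x, f k x * φ x ∂μ) * (∫ y, g k y * ψ y ∂ν)) := by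
  rw [← pair_half hf_int hg_int φ ψ hφm hψm hφb hψb,
    ← pair_half hf'_int hg'_int φ ψ hφm hψm hφb hψb]
  exact integral_congr_ae (hae.mono fun p hp => by dsimp only; rw [hp])

end TwoVar

lemma rowcomb {α : Type*} [MeasurableSpace α] {μ : Measure α}
    {g : Fin C → α → ℝ} {b : Fin C → ℝ} {F : α → ℝ} {φ : α → ℝ}
    (hg_int : ∀ j, Integrable (g j) μ) (hφm : Measurable φ)
    (hφb : ∃ M, ∀ x, |φ x| ≤ M)
    (hae : ∀ᵐ x ∂μ, F x = ∑ j, b j * g j x) :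
    ∫ x, F x * φ x ∂μ = ∑ j, b j * ∫ x, g j x * φ x ∂μ := by
  have h1 : ∀ᵐ x ∂μ, F x * φ x = ∑ j, b j * (g j x * φ x) := by
    filter_upwards [hae] with x hx
    rw [hx, Finset.sum_mul]
    exact Finset.sum_congr rfl fun j _ => by ring
  rw [integral_congr_ae h1,
    integral_finset_sum _ (fun j _ => (bdd_mul_int (hg_int j) hφm hφb).const_mul _)]
  exact Finset.sum_congr rfl fun j _ => integral_const_mul _ _

end AuxAll

set_option maxHeartbeats 2000000 in
/-- Sufficient condition for identifiability of a nonparametric conditional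
independence bivariate mixture model (Theorem 2 of the paper): if for every
component i and each variate the essential supremum (w.r.t. the mixture
marginal measure) of wᵢ f⁽ⁱ⁾ / P equals 1, where P is the mixture marginal
density, then the instance is uniquely identifiable up to permutation of the
component labels. -/
theorem statement_13 {C : ℕ} (hC : 2 ≤ C)
    {Xt Yt : Type*} [MeasurableSpace Xt] [MeasurableSpace Yt]
    (μ : Measure Xt) (ν : Measure Yt) [SigmaFinite μ] [SigmaFinite ν]
    (w : Fin C → ℝ) (fx : Fin C → Xt → ℝ) (fy : Fin C → Yt → ℝ)
    (hw_nonneg : ∀ i, 0 ≤ w i) (hw_sum : ∑ i, w i = 1)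
    (hfx_meas : ∀ i, Measurable (fx i)) (hfy_meas : ∀ i, Measurable (fy i))
    (hfx_nonneg : ∀ i x, 0 ≤ fx i x) (hfy_nonneg : ∀ i y, 0 ≤ fy i y)
    (hfx_one : ∀ i, ∫ x, fx i x ∂μ = 1) (hfy_one : ∀ i, ∫ y, fy i y ∂ν = 1)
    -- sufficient condition: each component completely dominates somewhere
    (hsuff_x : ∀ i : Fin C,
      essSup (fun x => w i * fx i x / (∑ k, w k * fx k x))
          (μ.withDensity (fun x => ENNReal.ofReal (∑ k, w k * fx k x))) = 1)
    (hsuff_y : ∀ i : Fin C,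
      essSup (fun y => w i * fy i y / (∑ k, w k * fy k y))
          (ν.withDensity (fun y => ENNReal.ofReal (∑ k, w k * fy k y))) = 1) :
    -- identifiability up to permutation of the component labels:
    ∀ (w' : Fin C → ℝ) (gx : Fin C → Xt → ℝ) (gy : Fin C → Yt → ℝ),
      (∀ i, 0 ≤ w' i) → ∑ i, w' i = 1 →
      (∀ i, Measurable (gx i)) → (∀ i, Measurable (gy i)) →
      (∀ i x, 0 ≤ gx i x) → (∀ i y, 0 ≤ gy i y) →
      (∀ i, ∫ x, gx i x ∂μ = 1) → (∀ i, ∫ y, gy i y ∂ν = 1) →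
      (∀ᵐ p ∂(μ.prod ν),
        ∑ i, w' i * gx i p.1 * gy i p.2 = ∑ i, w i * fx i p.1 * fy i p.2) →
      ∃ σ : Equiv.Perm (Fin C),
        ∀ i, w' i = w (σ i) ∧ gx i =ᵐ[μ] fx (σ i) ∧ gy i =ᵐ[ν] fy (σ i) := by
  intro w' gx gy hw'_nonneg hw'_sum hgx_meas hgy_meas hgx_nonneg hgy_nonneg hgx_one hgy_one hae
  classical
  -- measurability of the equality set on the product
  have hprodmeas : ∀ (u : Fin C → ℝ) (a : Fin C → Xt → ℝ) (b : Fin C → Yt → ℝ),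
      (∀ i, Measurable (a i)) → (∀ i, Measurable (b i)) →
      Measurable (fun p : Xt × Yt => ∑ i, u i * a i p.1 * b i p.2) := by
    intro u a b ham hbm
    apply Finset.measurable_sum
    intro i _
    exact (((ham i).comp measurable_fst).const_mul (u i)).mul ((hbm i).comp measurable_snd)
  have hmeasset : MeasurableSet {p : Xt × Yt |
      ∑ i, w' i * gx i p.1 * gy i p.2 = ∑ i, w i * fx i p.1 * fy i p.2} :=
    measurableSet_eq_fun (hprodmeas w' gx gy hgx_meas hgy_meas)
      (hprodmeas w fx fy hfx_meas hfy_meas)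
  have hxy : ∀ᵐ x ∂μ, ∀ᵐ y ∂ν,
      ∑ j, w' j * gx j x * gy j y = ∑ k, w k * fx k x * fy k y :=
    Measure.ae_ae_of_ae_prod hae
  have hyx : ∀ᵐ y ∂ν, ∀ᵐ x ∂μ,
      ∑ j, w' j * gx j x * gy j y = ∑ k, w k * fx k x * fy k y :=
    (Measure.ae_ae_comm hmeasset).mp hxy
  -- marginal equality in x
  have hmargx : ∀ᵐ x ∂μ, ∑ j, w' j * gx j x = ∑ k, w k * fx k x := by
    filter_upwards [hxy] with x hx
    have h1 : ∫ y, (∑ j, w' j * gx j x * gy j y) ∂ν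
        = ∫ y, (∑ k, w k * fx k x * fy k y) ∂ν := integral_congr_ae hx
    rw [integral_finset_sum _ (fun j _ => (myIntegrable (hgy_one j)).const_mul _),
      integral_finset_sum _ (fun k _ => (myIntegrable (hfy_one k)).const_mul _)] at h1
    simpa [integral_const_mul, hgy_one, hfy_one] using h1
  -- marginal equality in y
  have hmargy : ∀ᵐ y ∂ν, ∑ j, w' j * gy j y = ∑ k, w k * fy k y := by
    filter_upwards [hyx] with y hy
    have h1 : ∫ x, (∑ j, w' j * gx j x * gy j y) ∂μ
        = ∫ x, (∑ k, w k * fx k x * fy k y) ∂μ := integral_congr_ae hy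
    rw [integral_finset_sum _
        (fun j _ => ((myIntegrable (hgx_one j)).const_mul _).mul_const _),
      integral_finset_sum _
        (fun k _ => ((myIntegrable (hfx_one k)).const_mul _).mul_const _)] at h1
    simp only [integral_mul_const, integral_const_mul, hgx_one, hfx_one, mul_one] at h1
    exact h1
  -- the commuted kernel equality (for the y-side application)
  have hxy' : ∀ᵐ x ∂μ, ∀ᵐ y ∂ν,
      ∑ j, w' j * gy j y * gx j x = ∑ k, w k * fy k y * fx k x := by
    filter_upwards [hxy] with x hx
    filter_upwards [hx] with y hy
    have e1 : ∑ j, w' j * gy j y * gx j x = ∑ j, w' j * gx j x * gy j y :=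
      Finset.sum_congr rfl fun j _ => by ring
    have e2 : ∑ k, w k * fy k y * fx k x = ∑ k, w k * fx k x * fy k y :=
      Finset.sum_congr rfl fun k _ => by ring
    rw [e1, e2, hy]
  -- stochastic matrix A : fy i = ∑ j A i j • gy j
  have hAex := fun i => componentA hw_nonneg hfx_meas hfx_nonneg hfx_one
    hw'_nonneg hgx_meas hgx_nonneg hgx_one i (hsuff_x i) hyx hmargx
  choose A hAnn hAsum hAae using hAex
  -- stochastic matrix B : fx i = ∑ j B i j • gx j
  have hBex := fun i => componentA hw_nonneg hfy_meas hfy_nonneg hfy_one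
    hw'_nonneg hgy_meas hgy_nonneg hgy_one i (hsuff_y i) hxy' hmargy
  choose B hBnn hBsum hBae using hBex
  -- independence and dual functionals
  have hindep_x := indep hw_nonneg hfx_meas hfx_nonneg hfx_one hsuff_x
  have hindep_y := indep hw_nonneg hfy_meas hfy_nonneg hfy_one hsuff_y
  obtain ⟨φ, hφm, hφb, hφd⟩ :=
    dual hfx_meas (fun k => myIntegrable (hfx_one k)) hindep_x
  obtain ⟨ψ, hψm, hψb, hψd⟩ :=
    dual hfy_meas (fun k => myIntegrable (hfy_one k)) hindep_y
  -- matrices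
  set U : Matrix (Fin C) (Fin C) ℝ :=
    Matrix.of fun j l => ∫ x, gx j x * φ l x ∂μ with hUdef
  set V : Matrix (Fin C) (Fin C) ℝ :=
    Matrix.of fun j l => ∫ y, gy j y * ψ l y ∂ν with hVdef
  set MB : Matrix (Fin C) (Fin C) ℝ := Matrix.of B with hMBdef
  set MA : Matrix (Fin C) (Fin C) ℝ := Matrix.of A with hMAdef
  have hBU : MB * U = 1 := by
    ext i l
    rw [Matrix.mul_apply, Matrix.one_apply]
    have h1 : ∫ x, fx i x * φ l x ∂μ = ∑ j, B i j * ∫ x, gx j x * φ l x ∂μ :=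
      rowcomb (fun j => myIntegrable (hgx_one j)) (hφm l) (hφb l) (hBae i)
    rw [show (∑ j, MB i j * U j l) = ∫ x, fx i x * φ l x ∂μ from by rw [h1]; rfl]
    rw [hφd l i]
  have hAV : MA * V = 1 := by
    ext i l
    rw [Matrix.mul_apply, Matrix.one_apply]
    have h1 : ∫ y, fy i y * ψ l y ∂ν = ∑ j, A i j * ∫ y, gy j y * ψ l y ∂ν :=
      rowcomb (fun j => myIntegrable (hgy_one j)) (hψm l) (hψb l) (hAae i)
    rw [show (∑ j, MA i j * V j l) = ∫ y, fy i y * ψ l y ∂ν from by rw [h1]; rfl]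
    rw [hψd l i]
  -- the pairing identity
  have hpair : ∀ l m', ∑ j, w' j * (U j l * V j m') = if l = m' then w l else 0 := by
    intro l m'
    have h1 := pair (w := w) (w' := w') (f := fx) (f' := gx) (g := fy) (g' := gy)
      (fun k => myIntegrable (hfx_one k)) (fun k => myIntegrable (hfy_one k))
      (fun k => myIntegrable (hgx_one k)) (fun k => myIntegrable (hgy_one k))
      (φ l) (ψ m') (hφm l) (hψm m') (hφb l) (hψb m') hae
    have h2 : ∑ k, w k * ((∫ x, fx k x * φ l x ∂μ) * (∫ y, fy k y * ψ m' y ∂ν))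
        = if l = m' then w l else 0 := by
      rw [Finset.sum_congr rfl (fun k _ => by rw [hφd l k, hψd m' k])]
      by_cases h : l = m'
      · subst h
        rw [Finset.sum_eq_single l]
        · simp
        · intro k _ hk; simp [hk]
        · intro hk; exact absurd (Finset.mem_univ l) hk
      · rw [if_neg h]
        apply Finset.sum_eq_zero
        intro k _
        by_cases hkl : k = l
        · subst hkl
          rw [if_pos rfl, if_neg h]
          ring
        · simp [hkl]
    rw [← h2, ← h1]
    rfl
  -- matrix identity : U.transpose * W' * V = W
  set W : Matrix (Fin C) (Fin C) ℝ := Matrix.diagonal w with hWdef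
  set W' : Matrix (Fin C) (Fin C) ℝ := Matrix.diagonal w' with hW'def
  have hUWV : U.transpose * W' * V = W := by
    ext l m'
    rw [Matrix.mul_apply]
    have h1 : ∀ j, (U.transpose * W') l j = U j l * w' j := by
      intro j
      rw [Matrix.mul_diagonal, Matrix.transpose_apply]
    rw [Finset.sum_congr rfl (fun j _ => by rw [h1 j])]
    rw [show (∑ j, U j l * w' j * V j m') = ∑ j, w' j * (U j l * V j m') from
      Finset.sum_congr rfl fun j _ => by ring]
    rw [hpair l m', hWdef, Matrix.diagonal_apply]
  -- W' = Bᵀ W A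
  have hUB : U * MB = 1 := mul_eq_one_comm.mp hBU
  have hVA : V * MA = 1 := mul_eq_one_comm.mp hAV
  have hBtUt : MB.transpose * U.transpose = 1 := by
    rw [← Matrix.transpose_mul, hUB, Matrix.transpose_one]
  have hW'BA : MB.transpose * W * MA = W' := by
    calc MB.transpose * W * MA = MB.transpose * (U.transpose * W' * V) * MA := by rw [hUWV]
      _ = (MB.transpose * U.transpose) * (W' * (V * MA)) := by
          simp only [Matrix.mul_assoc]
      _ = W' := by rw [hBtUt, hVA, Matrix.mul_one, Matrix.one_mul]
  have hW'entry : ∀ j k, ∑ i, B i j * (w i * A i k) = if j = k then w' j else 0 := by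
    intro j k
    have h1 := congrFun (congrFun hW'BA j) k
    rw [Matrix.mul_apply] at h1
    have h2 : ∀ i, (MB.transpose * W) j i = B i j * w i := by
      intro i
      rw [Matrix.mul_diagonal, Matrix.transpose_apply]
      rfl
    rw [Finset.sum_congr rfl (fun i _ => by rw [h2 i])] at h1
    rw [hW'def, Matrix.diagonal_apply] at h1
    rw [← h1]
    exact Finset.sum_congr rfl fun i _ => by
      show B i j * (w i * A i k) = B i j * w i * MA i k
      rw [show MA i k = A i k from rfl]; ring
  -- positivity of weights
  have hwpos : ∀ i, 0 < w i := fun i => wpos hw_nonneg hfx_nonneg i (hsuff_x i)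
  -- off-diagonal terms vanish
  have hterm0 : ∀ j k, j ≠ k → ∀ i, B i j * A i k = 0 := by
    intro j k hjk i
    have h1 : ∑ t, B t j * (w t * A t k) = 0 := by
      rw [hW'entry j k, if_neg hjk]
    have h2 : ∀ t ∈ Finset.univ, 0 ≤ B t j * (w t * A t k) := fun t _ =>
      mul_nonneg (hBnn t j) (mul_nonneg (hwpos t).le (hAnn t k))
    have h3 := (Finset.sum_eq_zero_iff_of_nonneg h2).mp h1 i (Finset.mem_univ i)
    have h4 : w i * (B i j * A i k) = 0 := by rw [← h3]; ring
    rcases mul_eq_zero.mp h4 with h | h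
    · exact absurd h (hwpos i).ne'
    · exact h
  -- construct the permutation
  have hτex : ∀ i, ∃ j, 0 < B i j := by
    intro i
    by_contra hcon
    push_neg at hcon
    have : ∑ j, B i j = 0 :=
      Finset.sum_eq_zero fun j _ => le_antisymm (hcon j) (hBnn i j)
    rw [hBsum i] at this
    norm_num at this
  choose τ hτpos using hτex
  have hA0 : ∀ i k, k ≠ τ i → A i k = 0 := by
    intro i k hk
    have := hterm0 (τ i) k (fun h => hk h.symm) i
    rcases mul_eq_zero.mp this with h | h
    · exact absurd h (hτpos i).ne'
    · exact h
  have hA1 : ∀ i, A i (τ i) = 1 := by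
    intro i
    have := hAsum i
    rwa [Finset.sum_eq_single (τ i) (fun k _ hk => hA0 i k hk)
      (fun hk => absurd (Finset.mem_univ _) hk)] at this
  have hB0 : ∀ i j, j ≠ τ i → B i j = 0 := by
    intro i j hj
    have := hterm0 j (τ i) hj i
    rcases mul_eq_zero.mp this with h | h
    · exact h
    · rw [hA1 i] at h; norm_num at h
  have hB1 : ∀ i, B i (τ i) = 1 := by
    intro i
    have := hBsum i
    rwa [Finset.sum_eq_single (τ i) (fun k _ hk => hB0 i k hk)
      (fun hk => absurd (Finset.mem_univ _) hk)] at this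
  have hτinj : Function.Injective τ := by
    intro i₁ i₂ hteq
    by_contra hne
    have hArowV : ∀ i m', (MA * V) i m' = V (τ i) m' := by
      intro i m'
      rw [Matrix.mul_apply]
      rw [Finset.sum_eq_single (τ i)
        (fun k _ hk => by rw [show MA i k = A i k from rfl, hA0 i k hk, zero_mul])
        (fun hk => absurd (Finset.mem_univ _) hk)]
      rw [show MA i (τ i) = A i (τ i) from rfl, hA1 i, one_mul]
    have e1 : V (τ i₁) i₂ = 0 := by
      rw [← hArowV i₁ i₂, hAV, Matrix.one_apply_ne hne]
    have e2 : V (τ i₂) i₂ = 1 := by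
      rw [← hArowV i₂ i₂, hAV, Matrix.one_apply_eq]
    rw [hteq, e2] at e1
    norm_num at e1
  have hτbij : Function.Bijective τ := Finite.injective_iff_bijective.mp hτinj
  set e : Equiv.Perm (Fin C) := Equiv.ofBijective τ hτbij with hedef
  refine ⟨e.symm, fun i => ⟨?_, ?_, ?_⟩⟩
  · -- w' i = w (e.symm i)
    have hτσ : τ (e.symm i) = i := e.apply_symm_apply i
    have h1 := hW'entry i i
    rw [if_pos rfl] at h1
    have hb : B (e.symm i) i = 1 := by
      have := hB1 (e.symm i); rwa [hτσ] at this
    have ha : A (e.symm i) i = 1 := by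
      have := hA1 (e.symm i); rwa [hτσ] at this
    have hother : ∀ t ∈ Finset.univ, t ≠ e.symm i → B t i * (w t * A t i) = 0 := by
      intro t _ ht
      have hti : τ t ≠ i := by
        intro hh
        exact ht (hτinj (by rw [hh, hτσ]))
      rw [hA0 t i (fun hh => hti hh.symm)]
      ring
    rw [← h1, Finset.sum_eq_single (e.symm i) hother
      (fun hk => absurd (Finset.mem_univ _) hk), hb, ha]
    ring
  · -- gx i =ᵐ[μ] fx (e.symm i)
    have hτσ : τ (e.symm i) = i := e.apply_symm_apply i
    have h1 := hBae (e.symm i)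
    have h2 : ∀ᵐ x ∂μ, fx (e.symm i) x = gx i x := by
      filter_upwards [h1] with x hx
      rw [hx, Finset.sum_eq_single i]
      · have hb : B (e.symm i) i = 1 := by
          have := hB1 (e.symm i); rwa [hτσ] at this
        rw [hb, one_mul]
      · intro j _ hj
        have : B (e.symm i) j = 0 := hB0 _ j (by rw [hτσ]; exact hj)
        rw [this, zero_mul]
      · intro hk; exact absurd (Finset.mem_univ _) hk
    exact (h2.mono fun x hx => hx.symm)
  · -- gy i =ᵐ[ν] fy (e.symm i)
    have hτσ : τ (e.symm i) = i := e.apply_symm_apply i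
    have h1 := hAae (e.symm i)
    have h2 : ∀ᵐ y ∂ν, fy (e.symm i) y = gy i y := by
      filter_upwards [h1] with y hy
      rw [hy, Finset.sum_eq_single i]
      · have ha : A (e.symm i) i = 1 := by
          have := hA1 (e.symm i); rwa [hτσ] at this
        rw [ha, one_mul]
      · intro j _ hj
        have : A (e.symm i) j = 0 := hA0 _ j (by rw [hτσ]; exact hj)
        rw [this, zero_mul]
      · intro hk; exact absurd (Finset.mem_univ _) hk
    exact (h2.mono fun y hy => hy.symm)
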